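/- Fix integers a ≥ 2 and m ≥ a, and let τ_a ∈ S_{2a} be the permutation with τ_a(2i−1) = i and τ_a(2i) = 2a+1−i for 1 ≤ i ≤ a. If σ = σ_1⋯σ_{2m} ∈ S_{2m} has a τ_a-match starting at position 2i+1 for every i with 0 ≤ i ≤ m−a, then σ_{2i−1} = i and σ_{2i} = 2m+1−i for all 1 ≤ i ≤ m; that is, σ_1σ_3⋯σ_{2m−1} = 1 2 ⋯ m and σ_2σ_4⋯σ_{2m} = (2m)(2m−1)⋯(m+1), so σ = τ_m. -/
import Mathlib


open Finset

/-- `σ` has a `τ`-match starting at (0-indexed) position `i`: the factor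
`σ_i σ_{i+1} ⋯ σ_{i+j-1}` is order-isomorphic to the pattern `τ` (given in
one-line notation as a function `Fin j → ℕ`). -/
def patMatchAt {n j : ℕ} (τ : Fin j → ℕ) (σ : Equiv.Perm (Fin n)) (i : ℕ) : Prop :=
  ∃ h : i + j ≤ n, ∀ s t : Fin j,
    σ ⟨i + s.1, by have hs := s.2; omega⟩ < σ ⟨i + t.1, by have ht := t.2; omega⟩ ↔ τ s < τ t

/-- The number of descents of the permutation `σ`. -/
noncomputable def desNum {n : ℕ} (σ : Equiv.Perm (Fin n)) : ℕ :=
  {i : Fin n | ∃ h : i.1 + 1 < n, σ ⟨i.1 + 1, h⟩ < σ i}.ncard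

/-- The permutation `τ_a ∈ S_{2a}` in one-line notation: odd positions carry
`1,2,…,a` and even positions carry `2a, 2a-1, …, a+1`. -/
def tauPat (a : ℕ) : Fin (2 * a) → ℕ :=
  fun s => if s.1 % 2 = 0 then s.1 / 2 + 1 else 2 * a - s.1 / 2

theorem tau_a_overlap_rigidity (a m : ℕ) (ha : 2 ≤ a) (ham : a ≤ m)
    (σ : Equiv.Perm (Fin (2 * m)))
    (hmatch : ∀ i : ℕ, i + a ≤ m → patMatchAt (tauPat a) σ (2 * i)) :
    ∀ i : ℕ, ∀ hi : i < m,
      (σ ⟨2 * i, by omega⟩).1 = i ∧ (σ ⟨2 * i + 1, by omega⟩).1 = 2 * m - 1 - i := by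
  set v : ℕ → ℕ := fun p => if h : p < 2 * m then (σ ⟨p, h⟩).1 else 0 with hv
  have hvlt : ∀ p, v p < 2 * m := by
    intro p; simp only [hv]; split
    · exact (σ ⟨p, _⟩).2
    · omega
  have key : ∀ i p q, i + a ≤ m → ∀ hp : p < 2 * a, ∀ hq : q < 2 * a,
      tauPat a ⟨p, hp⟩ < tauPat a ⟨q, hq⟩ → v (2 * i + p) < v (2 * i + q) := by
    intro i p q hia hp hq hlt
    obtain ⟨hle, hiff⟩ := hmatch i hia
    have h2 := (hiff ⟨p, hp⟩ ⟨q, hq⟩).mpr hlt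
    simp only [hv]
    rw [dif_pos (by omega : 2 * i + p < 2 * m), dif_pos (by omega : 2 * i + q < 2 * m)]
    exact h2
  have hA : ∀ k, k + 1 < m → v (2 * k) < v (2 * k + 2) := by
    intro k hk
    set i := min k (m - a) with hidef
    set s := k - i with hsdef
    have h1 : i + a ≤ m := by omega
    have h2 : s + 1 < a := by omega
    have h3 := key i (2 * s) (2 * s + 2) h1 (by omega) (by omega) ?_
    · have e1 : 2 * i + 2 * s = 2 * k := by omega
      have e2 : 2 * i + (2 * s + 2) = 2 * k + 2 := by omega
      rwa [e1, e2] at h3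
    · simp only [tauPat]
      split_ifs <;> omega
  have hB : ∀ k, k + 1 < m → v (2 * k + 3) < v (2 * k + 1) := by
    intro k hk
    set i := min k (m - a) with hidef
    set s := k - i with hsdef
    have h1 : i + a ≤ m := by omega
    have h2 : s + 1 < a := by omega
    have h3 := key i (2 * s + 3) (2 * s + 1) h1 (by omega) (by omega) ?_
    · have e1 : 2 * i + (2 * s + 3) = 2 * k + 3 := by omega
      have e2 : 2 * i + (2 * s + 1) = 2 * k + 1 := by omega
      rwa [e1, e2] at h3
    · simp only [tauPat]
      split_ifs <;> omega
  have hC : v (2 * m - 2) < v (2 * m - 1) := by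
    have h3 := key (m - a) (2 * a - 2) (2 * a - 1) (by omega) (by omega) (by omega) ?_
    · have e1 : 2 * (m - a) + (2 * a - 2) = 2 * m - 2 := by omega
      have e2 : 2 * (m - a) + (2 * a - 1) = 2 * m - 1 := by omega
      rwa [e1, e2] at h3
    · simp only [tauPat]
      split_ifs <;> omega
  set u : ℕ → ℕ := fun j => if j < m then v (2 * j) else v (4 * m - 1 - 2 * j) with hu
  have hchain : ∀ j, j + 1 < 2 * m → u j < u (j + 1) := by
    intro j hj
    simp only [hu]
    split_ifs with h1 h2 h2
    · have e : 2 * (j + 1) = 2 * j + 2 := by omega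
      rw [e]; exact hA j h2
    · have e1 : 2 * j = 2 * m - 2 := by omega
      have e2 : 4 * m - 1 - 2 * (j + 1) = 2 * m - 1 := by omega
      rw [e1, e2]; exact hC
    · omega
    · have h3 := hB (2 * m - 2 - j) (by omega)
      have e1 : 2 * (2 * m - 2 - j) + 3 = 4 * m - 1 - 2 * j := by omega
      have e2 : 2 * (2 * m - 2 - j) + 1 = 4 * m - 1 - 2 * (j + 1) := by omega
      rwa [e1, e2] at h3
  have hlb : ∀ j, j < 2 * m → j ≤ u j := by
    intro j
    induction j with
    | zero => intro _; exact Nat.zero_le _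
    | succ n ih =>
      intro h
      have h1 := hchain n (by omega)
      have h2 := ih (by omega)
      omega
  have hub : ∀ j, j < 2 * m → u j ≤ j := by
    have hu2m : ∀ j, u j < 2 * m := by
      intro j; simp only [hu]; split <;> exact hvlt _
    have main : ∀ d j, j + d = 2 * m - 1 → u j ≤ j := by
      intro d
      induction d with
      | zero => intro j hj; have := hu2m j; omega
      | succ n ih =>
        intro j hj
        have h1 := hchain j (by omega)
        have h2 := ih (j + 1) (by omega)
        omega
    intro j hj
    exact main (2 * m - 1 - j) j (by omega)
  have huj : ∀ j, j < 2 * m → u j = j := fun j hj =>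
    le_antisymm (hub j hj) (hlb j hj)
  intro i hi
  constructor
  · have h1 := huj i (by omega)
    simp only [hu] at h1
    rw [if_pos hi] at h1
    simp only [hv] at h1
    rw [dif_pos (by omega : 2 * i < 2 * m)] at h1
    exact h1
  · have h1 := huj (2 * m - 1 - i) (by omega)
    simp only [hu] at h1
    rw [if_neg (by omega)] at h1
    have e : 4 * m - 1 - 2 * (2 * m - 1 - i) = 2 * i + 1 := by omega
    rw [e] at h1
    simp only [hv] at h1
    rw [dif_pos (by omega : 2 * i + 1 < 2 * m)] at h1
    exact h1
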